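/- If h : ℝ² → ℝ is a positive strictly log-concave function (jointly in both variables), then the marginal h*(y) = ∫ h(x,y) dx is strictly log-concave on ℝ: for all y₁ ≠ y₂ and 0 < λ < 1, h*(λy₁+(1-λ)y₂) > h*(y₁)^λ h*(y₂)^(1-λ). -/

import Mathlib

open MeasureTheory Set Filter Topology

/-- Strict log-concavity of a positive function on ℝ². -/
def StrictLogConcave2 (h : ℝ × ℝ → ℝ) : Prop :=
  ∀ p q : ℝ × ℝ, ∀ l : ℝ, p ≠ q → 0 < l → l < 1 →
    h (l • p + (1 - l) • q) > h p ^ l * h q ^ (1 - l)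

noncomputable def myCdf (f : ℝ → ℝ) (x : ℝ) : ℝ := ∫ t in Set.Iic x, f t

section cdf
variable {f : ℝ → ℝ}

lemma myCdf_eq (hi : Integrable f) (x : ℝ) :
    myCdf f x = myCdf f 0 + ∫ t in (0:ℝ)..x, f t := by
  have := intervalIntegral.integral_Iic_sub_Iic (hi.integrableOn (s := Iic 0))
    (hi.integrableOn (s := Iic x))
  simp only [myCdf]
  linarith

lemma hasDerivAt_myCdf (hc : Continuous f) (hi : Integrable f) (x : ℝ) :
    HasDerivAt (myCdf f) (f x) x := by
  have h1 : HasDerivAt (fun u => ∫ t in (0:ℝ)..u, f t) (f x) x :=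
    intervalIntegral.integral_hasDerivAt_right hi.intervalIntegrable
      (hc.stronglyMeasurableAtFilter _ _) hc.continuousAt
  have h2 := h1.const_add (myCdf f 0)
  exact h2.congr_of_eventuallyEq (Filter.Eventually.of_forall fun y => myCdf_eq hi y)

lemma strictMono_myCdf (hc : Continuous f) (hi : Integrable f) (hp : ∀ x, 0 < f x) :
    StrictMono (myCdf f) := by
  apply strictMono_of_deriv_pos
  intro x
  rw [(hasDerivAt_myCdf hc hi x).deriv]
  exact hp x

lemma support_univ (hp : ∀ x, 0 < f x) : Function.support f = Set.univ :=
  Set.eq_univ_iff_forall.mpr fun x => (hp x).ne'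

lemma myCdf_pos (hi : Integrable f) (hp : ∀ x, 0 < f x) (x : ℝ) : 0 < myCdf f x := by
  rw [myCdf, MeasureTheory.setIntegral_pos_iff_support_of_nonneg_ae
    (Filter.Eventually.of_forall fun t => (hp t).le) hi.integrableOn]
  rw [support_univ hp, Set.univ_inter, Real.volume_Iic]
  simp

lemma myCdf_lt (hi : Integrable f) (hp : ∀ x, 0 < f x) (x : ℝ) : myCdf f x < ∫ t, f t := by
  have hsplit := intervalIntegral.integral_Iic_add_Ioi (b := x)
    hi.integrableOn hi.integrableOn
  have hpos : 0 < ∫ t in Set.Ioi x, f t := by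
    rw [MeasureTheory.setIntegral_pos_iff_support_of_nonneg_ae
      (Filter.Eventually.of_forall fun t => (hp t).le) hi.integrableOn]
    rw [support_univ hp, Set.univ_inter, Real.volume_Ioi]
    simp
  rw [myCdf]; linarith

lemma tendsto_myCdf_atBot (hi : Integrable f) :
    Tendsto (myCdf f) atBot (𝓝 0) := by
  have A := MeasureTheory.intervalIntegral_tendsto_integral_Iic (μ := volume)
    (b := (0:ℝ)) hi.integrableOn (tendsto_id (α := ℝ) (x := atBot))
  have B : ∀ x : ℝ, myCdf f x = myCdf f 0 - ∫ t in x..(0:ℝ), f t := by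
    intro x
    have := intervalIntegral.integral_Iic_sub_Iic (hi.integrableOn (s := Iic x))
      (hi.integrableOn (s := Iic 0))
    simp only [myCdf]; linarith
  have : Tendsto (fun x : ℝ => myCdf f 0 - ∫ t in x..(0:ℝ), f t) atBot
      (𝓝 (myCdf f 0 - ∫ t in Iic (0:ℝ), f t)) := (tendsto_const_nhds.sub A)
  have h0 : myCdf f 0 - ∫ t in Iic (0:ℝ), f t = 0 := by simp [myCdf]
  rw [h0] at this
  exact this.congr fun x => (B x).symm

lemma tendsto_myCdf_atTop (hi : Integrable f) :
    Tendsto (myCdf f) atTop (𝓝 (∫ t, f t)) := by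
  have A := MeasureTheory.intervalIntegral_tendsto_integral_Ioi (μ := volume)
    (a := (0:ℝ)) hi.integrableOn (tendsto_id (α := ℝ) (x := atTop))
  have : Tendsto (fun x : ℝ => myCdf f 0 + ∫ t in (0:ℝ)..x, f t) atTop
      (𝓝 (myCdf f 0 + ∫ t in Ioi (0:ℝ), f t)) := tendsto_const_nhds.add A
  have heq : myCdf f 0 + ∫ t in Ioi (0:ℝ), f t = ∫ t, f t :=
    intervalIntegral.integral_Iic_add_Ioi hi.integrableOn hi.integrableOn
  rw [heq] at this
  exact this.congr fun x => (myCdf_eq hi x).symm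

lemma myCdf_surj (hc : Continuous f) (hi : Integrable f) (hp : ∀ x, 0 < f x) {z : ℝ}
    (hz0 : 0 < z) (hz1 : z < ∫ t, f t) : ∃ y, myCdf f y = z := by
  obtain ⟨a, ha⟩ := ((tendsto_myCdf_atBot hi).eventually (eventually_lt_nhds hz0)).exists
  obtain ⟨b, hb⟩ := ((tendsto_myCdf_atTop hi).eventually
    (eventually_gt_nhds hz1)).exists
  have hcont : Continuous (myCdf f) := by
    have := fun x => (hasDerivAt_myCdf hc hi x).differentiableAt
    exact (Differentiable.continuous this)
  rcases le_or_gt a b with hab | hab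
  · have := intermediate_value_Icc hab hcont.continuousOn
    obtain ⟨y, _, hy⟩ := this ⟨ha.le, hb.le⟩
    exact ⟨y, hy⟩
  · have := (strictMono_myCdf hc hi hp).monotone hab.le
    linarith

end cdf

lemma slice_continuous (h : ℝ × ℝ → ℝ) (h_pos : ∀ p, 0 < h p)
    (h_slc : StrictLogConcave2 h) (y : ℝ) : Continuous fun x => h (x, y) := by
  have hconc : ConcaveOn ℝ Set.univ fun x => Real.log (h (x, y)) := by
    refine ⟨convex_univ, fun x₁ _ x₂ _ a b ha hb hab => ?_⟩
    rcases eq_or_lt_of_le ha with rfl | ha'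
    · have hb1 : b = 1 := by linarith
      subst hb1; simp
    rcases eq_or_lt_of_le hb with rfl | hb'
    · have ha1 : a = 1 := by linarith
      subst ha1; simp
    rcases eq_or_ne x₁ x₂ with rfl | hne
    · have hx : a • x₁ + b • x₁ = x₁ := by
        rw [← add_smul, hab, one_smul]
      rw [hx, smul_eq_mul, smul_eq_mul, ← add_mul, hab, one_mul]
    · have hb1 : b = 1 - a := by linarith
      subst hb1
      have hpq : ((x₁ : ℝ), y) ≠ (x₂, y) := by
        simp [Prod.ext_iff, hne]
      have key := h_slc (x₁, y) (x₂, y) a hpq ha' (by linarith)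
      have hpt : a • ((x₁:ℝ), y) + (1 - a) • ((x₂:ℝ), y) = (a • x₁ + (1 - a) • x₂, y) := by
        simp [Prod.ext_iff, smul_eq_mul]; ring
      rw [hpt] at key
      have hlog := Real.log_lt_log (mul_pos (Real.rpow_pos_of_pos (h_pos _) _)
        (Real.rpow_pos_of_pos (h_pos _) _)) key
      rw [Real.log_mul (Real.rpow_pos_of_pos (h_pos _) _).ne'
          (Real.rpow_pos_of_pos (h_pos _) _).ne',
        Real.log_rpow (h_pos _), Real.log_rpow (h_pos _)] at hlog
      simp only [smul_eq_mul] at hlog ⊢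
      linarith
  have hcont : Continuous fun x => Real.log (h (x, y)) := by
    rw [← continuousOn_univ]
    exact hconc.continuousOn isOpen_univ
  have hfun : (fun x => h (x, y)) = fun x => Real.exp (Real.log (h (x, y))) := by
    funext x; rw [Real.exp_log (h_pos _)]
  rw [hfun]; exact Real.continuous_exp.comp hcont

theorem marginal_strictLogConcave
    (h : ℝ × ℝ → ℝ)
    (h_pos : ∀ p, 0 < h p)
    (h_slc : StrictLogConcave2 h)
    (hint : ∀ y : ℝ, Integrable (fun x => h (x, y)))
    (hpos_int : ∀ y : ℝ, 0 < ∫ x : ℝ, h (x, y))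
    (hstar : ℝ → ℝ) (hhstar : ∀ y, hstar y = ∫ x : ℝ, h (x, y)) :
    ∀ y₁ y₂ l : ℝ, y₁ ≠ y₂ → 0 < l → l < 1 →
      hstar (l * y₁ + (1 - l) * y₂) > hstar y₁ ^ l * hstar y₂ ^ (1 - l) := by
  intro y₁ y₂ l hne hl0 hl1
  have hl1' : (0:ℝ) < 1 - l := by linarith
  set ybar := l * y₁ + (1 - l) * y₂ with hybar
  set f : ℝ → ℝ := fun x => h (x, y₁) with hf
  set g : ℝ → ℝ := fun x => h (x, y₂) with hg
  set H : ℝ → ℝ := fun x => h (x, ybar) with hH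
  have hfc : Continuous f := slice_continuous h h_pos h_slc y₁
  have hgc : Continuous g := slice_continuous h h_pos h_slc y₂
  have hfi : Integrable f := hint y₁
  have hgi : Integrable g := hint y₂
  have hfp : ∀ x, 0 < f x := fun x => h_pos _
  have hgp : ∀ x, 0 < g x := fun x => h_pos _
  set Tf : ℝ := ∫ x, f x with hTf
  set Tg : ℝ := ∫ x, g x with hTg
  have hTf0 : 0 < Tf := hpos_int y₁
  have hTg0 : 0 < Tg := hpos_int y₂
  set c : ℝ := Tg / Tf with hc
  have hc0 : 0 < c := div_pos hTg0 hTf0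
  have hsurj : ∀ z : ℝ, 0 < z → z < Tg → ∃ y, myCdf g y = z := fun z h1 h2 =>
    myCdf_surj hgc hgi hgp h1 h2
  set Ginv : ℝ → ℝ := fun z =>
    if hz : 0 < z ∧ z < Tg then (hsurj z hz.1 hz.2).choose else 0 with hGinvdef
  have hGinv_spec : ∀ z, 0 < z → z < Tg → myCdf g (Ginv z) = z := by
    intro z h1 h2
    simp only [hGinvdef, dif_pos (And.intro h1 h2)]
    exact (hsurj z h1 h2).choose_spec
  have hGmono := strictMono_myCdf hgc hgi hgp
  have hGinv_mono : StrictMonoOn Ginv (Ioo 0 Tg) := by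
    intro z hz w hw hzw
    rw [← hGmono.lt_iff_lt, hGinv_spec z hz.1 hz.2, hGinv_spec w hw.1 hw.2]
    exact hzw
  have hGinv_img : Ginv '' (Ioo 0 Tg) = univ := by
    apply eq_univ_iff_forall.mpr; intro y
    refine ⟨myCdf g y, ⟨myCdf_pos hgi hgp y, myCdf_lt hgi hgp y⟩, ?_⟩
    apply hGmono.injective
    rw [hGinv_spec _ (myCdf_pos hgi hgp y) (myCdf_lt hgi hgp y)]
  have hGinv_deriv : ∀ z ∈ Ioo (0:ℝ) Tg, HasDerivAt Ginv (g (Ginv z))⁻¹ z := by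
    intro z hz
    have hcontz : ContinuousAt Ginv z := by
      apply hGinv_mono.continuousAt_of_image_mem_nhds (isOpen_Ioo.mem_nhds hz)
      rw [hGinv_img]; exact univ_mem
    apply HasDerivAt.of_local_left_inverse hcontz
      (hasDerivAt_myCdf hgc hgi (Ginv z)) (hgp _).ne'
    filter_upwards [isOpen_Ioo.mem_nhds hz] with u hu
    exact hGinv_spec u hu.1 hu.2
  set T : ℝ → ℝ := fun x => Ginv (c * myCdf f x) with hTdef
  have hzx : ∀ x, 0 < c * myCdf f x ∧ c * myCdf f x < Tg := by
    intro x
    refine ⟨mul_pos hc0 (myCdf_pos hfi hfp x), ?_⟩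
    have hx := myCdf_lt hfi hfp x
    have : c * myCdf f x < c * Tf := mul_lt_mul_of_pos_left hx hc0
    calc c * myCdf f x < c * Tf := this
      _ = Tg := by rw [hc]; field_simp
  have hTspec : ∀ x, myCdf g (T x) = c * myCdf f x := fun x =>
    hGinv_spec _ (hzx x).1 (hzx x).2
  set T' : ℝ → ℝ := fun x => (g (T x))⁻¹ * (c * f x) with hT'def
  have hT'pos : ∀ x, 0 < T' x := fun x =>
    mul_pos (inv_pos.mpr (hgp _)) (mul_pos hc0 (hfp x))
  have hTderiv : ∀ x, HasDerivAt T (T' x) x := by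
    intro x
    have h1 : HasDerivAt (fun u => c * myCdf f u) (c * f x) x :=
      (hasDerivAt_myCdf hfc hfi x).const_mul c
    exact (hGinv_deriv _ ⟨(hzx x).1, (hzx x).2⟩).comp x h1
  set w : ℝ → ℝ := fun x => l * x + (1 - l) * T x with hwdef
  set w' : ℝ → ℝ := fun x => l + (1 - l) * T' x with hw'def
  have hw'pos : ∀ x, 0 < w' x := by
    intro x
    have := hT'pos x
    simp only [hw'def]
    nlinarith
  have hwderiv : ∀ x, HasDerivAt w (w' x) x := by
    intro x
    have h1 : HasDerivAt (fun u : ℝ => l * u) l x := by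
      simpa using (hasDerivAt_id x).const_mul l
    exact h1.add ((hTderiv x).const_mul (1 - l))
  have hTmono : StrictMono T := by
    intro a b hab
    have h1 := (strictMono_myCdf hfc hfi hfp) hab
    have h2 : myCdf g (T a) < myCdf g (T b) := by
      rw [hTspec, hTspec]; nlinarith
    exact hGmono.lt_iff_lt.mp h2
  have hwmono : StrictMono w := by
    intro a b hab
    have h1 := hTmono hab
    have h2 : l * a < l * b := by nlinarith
    have h3 : (1 - l) * T a < (1 - l) * T b := by nlinarith
    exact add_lt_add h2 h3
  have hkey : ∀ x, c ^ (1 - l) * f x < |w' x| * H (w x) := by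
    intro x
    have hH1 : f x ^ l * g (T x) ^ (1 - l) < H (w x) := by
      have hpq : ((x : ℝ), y₁) ≠ (T x, y₂) := fun hcontra =>
        hne (congrArg Prod.snd hcontra)
      have hkey0 := h_slc (x, y₁) (T x, y₂) l hpq hl0 hl1
      have hpt : l • ((x:ℝ), y₁) + (1 - l) • ((T x : ℝ), y₂) = (w x, ybar) := by
        simp [Prod.ext_iff, smul_eq_mul, hwdef, hybar]
      rw [hpt] at hkey0
      exact hkey0
    have hAM : T' x ^ (1 - l) ≤ w' x := by
      have ham := Real.geom_mean_le_arith_mean2_weighted hl0.le hl1'.le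
        zero_le_one (hT'pos x).le (by ring)
      simpa [hw'def] using ham
    have hcomp : T' x ^ (1 - l) * (f x ^ l * g (T x) ^ (1 - l)) = c ^ (1 - l) * f x := by
      have e1 : T' x ^ (1 - l) =
          (g (T x) ^ (1 - l))⁻¹ * (c ^ (1 - l) * f x ^ (1 - l)) := by
        rw [hT'def]
        rw [Real.mul_rpow (inv_nonneg.mpr (hgp _).le) (mul_pos hc0 (hfp x)).le,
          Real.mul_rpow hc0.le (hfp x).le, Real.inv_rpow (hgp _).le]
      have e2 : f x ^ (1 - l) * f x ^ l = f x := by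
        rw [← Real.rpow_add (hfp x)]; norm_num
      have e3 : (g (T x) ^ (1 - l))⁻¹ * g (T x) ^ (1 - l) = 1 :=
        inv_mul_cancel₀ (Real.rpow_pos_of_pos (hgp _) _).ne'
      calc T' x ^ (1 - l) * (f x ^ l * g (T x) ^ (1 - l))
          = c ^ (1 - l) * (f x ^ (1 - l) * f x ^ l) *
            ((g (T x) ^ (1 - l))⁻¹ * g (T x) ^ (1 - l)) := by rw [e1]; ring
        _ = c ^ (1 - l) * f x := by rw [e2, e3, mul_one]
    calc c ^ (1 - l) * f x
        = T' x ^ (1 - l) * (f x ^ l * g (T x) ^ (1 - l)) := hcomp.symm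
      _ < T' x ^ (1 - l) * H (w x) :=
        mul_lt_mul_of_pos_left hH1 (Real.rpow_pos_of_pos (hT'pos x) _)
      _ ≤ w' x * H (w x) := mul_le_mul_of_nonneg_right hAM (h_pos _).le
      _ = |w' x| * H (w x) := by rw [abs_of_pos (hw'pos x)]
  -- change of variables
  have hderivW : ∀ x ∈ (univ : Set ℝ), HasDerivWithinAt w (w' x) univ x :=
    fun x _ => (hwderiv x).hasDerivWithinAt
  have hinj : InjOn w univ := hwmono.injective.injOn
  have hHi : Integrable H := hint ybar
  have hCOV := MeasureTheory.integral_image_eq_integral_abs_deriv_smul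
    MeasurableSet.univ hderivW hinj H
  have hφint : Integrable (fun x => |w' x| • H (w x)) := by
    rw [← integrableOn_univ]
    exact (MeasureTheory.integrableOn_image_iff_integrableOn_abs_deriv_smul
      MeasurableSet.univ hderivW hinj H).mp hHi.integrableOn
  have hstep1 : ∫ x in w '' univ, H x ≤ ∫ x, H x :=
    setIntegral_le_integral hHi (Filter.Eventually.of_forall fun x => (h_pos _).le)
  have hstrict : c ^ (1 - l) * Tf < ∫ x, |w' x| • H (w x) := by
    have hdiffint : Integrable (fun x => |w' x| • H (w x) - c ^ (1 - l) * f x) :=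
      hφint.sub (hfi.const_mul _)
    have hnn : 0 ≤ fun x => |w' x| • H (w x) - c ^ (1 - l) * f x := by
      intro x; simp only [smul_eq_mul, Pi.zero_apply]
      have := hkey x; linarith
    have hpos2 : 0 < ∫ x, (|w' x| • H (w x) - c ^ (1 - l) * f x) := by
      rw [integral_pos_iff_support_of_nonneg hnn hdiffint]
      have hsupp : Function.support (fun x => |w' x| • H (w x) - c ^ (1 - l) * f x) = univ := by
        apply eq_univ_iff_forall.mpr
        intro x
        have := hkey x
        simp only [Function.mem_support, smul_eq_mul]
        intro hcontra; rw [sub_eq_zero] at hcontra; linarith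
      rw [hsupp]
      simp [Real.volume_univ]
    rw [integral_sub hφint (hfi.const_mul _), integral_const_mul] at hpos2
    rw [← hTf] at hpos2
    linarith
  have hfinal : Tf ^ l * Tg ^ (1 - l) = c ^ (1 - l) * Tf := by
    have e : Tf ^ (1 - l) * Tf ^ l = Tf := by
      rw [← Real.rpow_add hTf0]; norm_num
    rw [hc, Real.div_rpow hTg0.le hTf0.le]
    have hTfne : Tf ^ (1 - l) ≠ 0 := (Real.rpow_pos_of_pos hTf0 _).ne'
    field_simp
    linear_combination e
  have hmid : ∫ x, |w' x| • H (w x) ≤ ∫ x, H x := by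
    have : ∫ x in (univ : Set ℝ), |w' x| • H (w x) = ∫ x, |w' x| • H (w x) := by
      rw [setIntegral_univ]
    rw [← this, ← hCOV]
    exact hstep1
  rw [hhstar, hhstar, hhstar]
  calc (∫ x, h (x, y₁)) ^ l * (∫ x, h (x, y₂)) ^ (1 - l)
      = Tf ^ l * Tg ^ (1 - l) := rfl
    _ = c ^ (1 - l) * Tf := hfinal
    _ < ∫ x, |w' x| • H (w x) := hstrict
    _ ≤ ∫ x, H x := hmid
    _ = ∫ x, h (x, ybar) := rfl
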